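/- A sequence {X_n} of mm-spaces with μ_{X_n}(X_n) = 1 is a Lévy family if and only if lim_{n→∞} Sep(X_n; κ, κ) = 0 for every κ > 0. -/

import Mathlib

open MeasureTheory Metric Set Filter Topology ENNReal

noncomputable section

/-- The extended distance `d(A,B)` between two subsets of an (extended) metric space. -/
def setEDist {X : Type*} [PseudoEMetricSpace X] (A B : Set X) : ℝ≥0∞ :=
  ⨅ (x ∈ A) (y ∈ B), edist x y

/-- The partial diameter `diam(ν, ν(X) − κ)`: the infimum of the diameters of Borel
subsets of measure at least `ν(X) − κ`. -/
def partialDiam {X : Type*} [PseudoEMetricSpace X] [MeasurableSpace X]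
    (ν : Measure X) (κ : ℝ≥0∞) : ℝ≥0∞ :=
  ⨅ (A : Set X) (_ : MeasurableSet A) (_ : ν univ - κ ≤ ν A), EMetric.diam A

/-- The separation distance `Sep(ν; κ₁, κ₂)`: the supremum of `d(A,B)` over Borel sets
`A, B` with `ν(A) ≥ κ₁` and `ν(B) ≥ κ₂`. -/
def sepDist {X : Type*} [PseudoEMetricSpace X] [MeasurableSpace X]
    (ν : Measure X) (κ₁ κ₂ : ℝ≥0∞) : ℝ≥0∞ :=
  ⨆ (A : Set X) (B : Set X) (_ : MeasurableSet A) (_ : MeasurableSet B)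
    (_ : κ₁ ≤ ν A) (_ : κ₂ ≤ ν B), setEDist A B

/-- The observable diameter `ObsDiam_Y(X; −κ)`. -/
def obsDiam (Y : Type*) [PseudoEMetricSpace Y] [MeasurableSpace Y]
    {X : Type*} [PseudoEMetricSpace X] [MeasurableSpace X]
    (μ : Measure X) (κ : ℝ≥0∞) : ℝ≥0∞ :=
  ⨆ (f : X → Y) (_ : LipschitzWith 1 f), partialDiam (Measure.map f μ) κ

lemma setEDist_le_edist {Z : Type*} [PseudoEMetricSpace Z] {A B : Set Z} {x y : Z}
    (hx : x ∈ A) (hy : y ∈ B) : setEDist A B ≤ edist x y :=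
  iInf₂_le_of_le x hx (iInf₂_le y hy)

section A
variable {Z : Type*} [MetricSpace Z] [MeasurableSpace Z] [BorelSpace Z]

lemma sep_le_obs (μ : Measure Z) [IsProbabilityMeasure μ] {κ' κ : ℝ≥0∞}
    (h : κ' < κ) : sepDist μ κ κ ≤ obsDiam ℝ μ κ' := by
  refine iSup_le fun A => iSup_le fun B => iSup_le fun hA => iSup_le fun hB =>
    iSup_le fun hμA => iSup_le fun hμB => ?_
  have hκpos : 0 < κ := lt_of_le_of_lt zero_le h
  have hAne : A.Nonempty := nonempty_of_measure_ne_zero (hκpos.trans_le hμA).ne'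
  have hBne : B.Nonempty := nonempty_of_measure_ne_zero (hκpos.trans_le hμB).ne'
  obtain ⟨x₀, hx₀⟩ := hAne
  obtain ⟨y₀, hy₀⟩ := hBne
  set D : ℝ≥0∞ := setEDist A B with hDdef
  have hDtop : D ≠ ∞ := ne_top_of_le_ne_top (edist_ne_top x₀ y₀) (setEDist_le_edist hx₀ hy₀)
  set d : ℝ := D.toReal with hddef
  set f : Z → ℝ := fun x => infDist x A with hfdef
  have hfl : LipschitzWith 1 f := lipschitz_infDist_pt A
  have hfm : Measurable f := measurable_infDist
  refine le_trans ?_ (le_iSup₂_of_le f hfl le_rfl)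
  refine le_iInf fun S => le_iInf fun hS => le_iInf fun hle => ?_
  set ν : Measure ℝ := Measure.map f μ with hνdef
  haveI : IsProbabilityMeasure ν := Measure.isProbabilityMeasure_map hfm.aemeasurable
  have hν1 : ν univ = 1 := measure_univ
  rw [hν1] at hle
  have hcompl : ν Sᶜ ≤ κ' := by
    rw [measure_compl hS (measure_ne_top ν S), hν1]
    exact (tsub_le_tsub_left hle 1).trans tsub_tsub_le
  have hIic : κ ≤ ν (Iic 0) := by
    rw [hνdef, Measure.map_apply hfm measurableSet_Iic]
    refine hμA.trans (measure_mono fun x hx => ?_)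
    simp only [mem_preimage, mem_Iic, hfdef]
    exact le_of_eq (infDist_zero_of_mem hx)
  have hIci : κ ≤ ν (Ici d) := by
    rw [hνdef, Measure.map_apply hfm measurableSet_Ici]
    refine hμB.trans (measure_mono fun y hy => ?_)
    simp only [mem_preimage, mem_Ici, hfdef]
    have h1 : D ≤ EMetric.infEdist y A :=
      EMetric.le_infEdist.mpr fun z hz => edist_comm y z ▸ setEDist_le_edist hz hy
    have h2 : (EMetric.infEdist y A).toReal = infDist y A := rfl
    rw [← h2]
    exact ENNReal.toReal_mono (infEdist_ne_top ⟨x₀, hx₀⟩) h1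
  have key : ∀ T : Set ℝ, κ ≤ ν T → (S ∩ T).Nonempty := by
    intro T hT
    refine nonempty_of_measure_ne_zero (μ := ν) fun h0 => ?_
    have : ν T ≤ ν (S ∩ T) + ν Sᶜ :=
      (measure_mono fun x hx => by
        by_cases hxS : x ∈ S
        · exact Or.inl ⟨hxS, hx⟩
        · exact Or.inr hxS).trans (measure_union_le _ _)
    rw [h0, zero_add] at this
    exact absurd (hT.trans (this.trans hcompl)) (not_le.mpr h)
  obtain ⟨p, hpS, hp0⟩ := key (Iic 0) hIic
  obtain ⟨q, hqS, hqd⟩ := key (Ici d) hIci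
  calc D = ENNReal.ofReal d := (ENNReal.ofReal_toReal hDtop).symm
    _ ≤ edist p q := by
        rw [edist_dist]
        refine ENNReal.ofReal_le_ofReal ?_
        rw [Real.dist_eq]
        have := le_abs_self (q - p)
        have := abs_sub_comm p q
        simp only [mem_Iic] at hp0
        simp only [mem_Ici] at hqd
        linarith [le_abs_self (q - p), (abs_sub_comm q p)]
    _ ≤ EMetric.diam S := EMetric.edist_le_diam_of_mem hpS hqS

lemma sep_map_le (μ : Measure Z) {f : Z → ℝ} (hf : LipschitzWith 1 f) (κ₁ κ₂ : ℝ≥0∞) :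
    sepDist (Measure.map f μ) κ₁ κ₂ ≤ sepDist μ κ₁ κ₂ := by
  have hfm : Measurable f := hf.continuous.measurable
  refine iSup_le fun A => iSup_le fun B => iSup_le fun hA => iSup_le fun hB =>
    iSup_le fun h1 => iSup_le fun h2 => ?_
  rw [Measure.map_apply hfm hA] at h1
  rw [Measure.map_apply hfm hB] at h2
  refine le_trans ?_ (le_iSup_of_le (f ⁻¹' A) (le_iSup_of_le (f ⁻¹' B)
    (le_iSup_of_le (hfm hA) (le_iSup_of_le (hfm hB)
      (le_iSup_of_le h1 (le_iSup_of_le h2 le_rfl))))))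
  refine le_iInf₂ fun x hx => le_iInf₂ fun y hy => ?_
  exact le_trans (setEDist_le_edist (A := A) (B := B) hx hy) (by simpa using hf x y)

end A

lemma partialDiam_le_sepDist_real (ν : Measure ℝ) [IsProbabilityMeasure ν]
    {κ κ' : ℝ≥0∞} (hκ'0 : κ' ≠ 0) (h2 : 2 * κ' ≤ κ) :
    partialDiam ν κ ≤ sepDist ν κ' κ' := by
  by_cases hκ1 : 1 ≤ κ
  · have h0 : partialDiam ν κ ≤ EMetric.diam (∅ : Set ℝ) :=
      iInf₂_le_of_le ∅ MeasurableSet.empty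
        (iInf_le_of_le (by simp [measure_univ, tsub_eq_zero_of_le hκ1]) le_rfl)
    exact le_trans h0 (by rw [show EMetric.diam (∅ : Set ℝ) = 0 from Metric.ediam_empty]; exact zero_le)
  push_neg at hκ1
  have hκ'lt1 : κ' < 1 := lt_of_le_of_lt (le_trans (by
    calc κ' = 1 * κ' := (one_mul _).symm
      _ ≤ 2 * κ' := by gcongr; norm_num) h2) hκ1
  -- the set of right κ'-quantiles
  set SA : Set ℝ := {t | κ' ≤ ν (Iic t)} with hSAdef
  have hSAne : SA.Nonempty := by
    obtain ⟨t, ht⟩ := ((tendsto_measure_Iic_atTop ν).eventually_const_le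
      (by rw [measure_univ]; exact hκ'lt1)).exists
    exact ⟨t, ht⟩
  have hSAbdd : BddBelow SA := by
    have hempty : ⋂ n : ℕ, Iic (-(n : ℝ)) = ∅ := by
      ext x
      simp only [mem_iInter, mem_Iic, mem_empty_iff_false, iff_false, not_forall, not_le]
      obtain ⟨n, hn⟩ := exists_nat_gt (-x)
      exact ⟨n, by linarith⟩
    have htend : Tendsto (fun n : ℕ => ν (Iic (-(n : ℝ)))) atTop (𝓝 0) := by
      have := tendsto_measure_iInter_atTop (μ := ν)
        (fun n : ℕ => measurableSet_Iic.nullMeasurableSet)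
        (fun n m hnm => Iic_subset_Iic.mpr (by exact_mod_cast neg_le_neg (Nat.cast_le.mpr hnm)))
        ⟨0, measure_ne_top ν _⟩
      rwa [hempty, measure_empty] at this
    obtain ⟨n, hn⟩ := (htend.eventually_lt_const (pos_iff_ne_zero.mpr hκ'0)).exists
    refine ⟨-(n : ℝ), fun t ht => le_of_not_gt fun hlt => ?_⟩
    exact absurd (ht.trans (measure_mono (Iic_subset_Iic.mpr hlt.le))) (not_le.mpr hn)
  set a : ℝ := sInf SA with hadef
  have haIic : κ' ≤ ν (Iic a) := by
    have hinter : ⋂ n : ℕ, Iic (a + 1 / (n + 1 : ℝ)) = Iic a := by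
      ext x
      simp only [mem_iInter, mem_Iic]
      constructor
      · intro hx
        by_contra hxa
        push_neg at hxa
        obtain ⟨n, hn⟩ := exists_nat_one_div_lt (sub_pos.mpr hxa)
        exact absurd (hx n) (by push_cast; linarith)
      · intro hx n
        have : (0 : ℝ) < 1 / (n + 1 : ℝ) := by positivity
        linarith
    have htend : Tendsto (fun n : ℕ => ν (Iic (a + 1 / (n + 1 : ℝ)))) atTop (𝓝 (ν (Iic a))) := by
      have := tendsto_measure_iInter_atTop (μ := ν)
        (s := fun n : ℕ => Iic (a + 1 / (n + 1 : ℝ)))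
        (fun n : ℕ => measurableSet_Iic.nullMeasurableSet)
        (fun n m hnm => Iic_subset_Iic.mpr (by
          have hc : (n : ℝ) ≤ m := Nat.cast_le.mpr hnm
          have : 1 / (m + 1 : ℝ) ≤ 1 / (n + 1 : ℝ) :=
            one_div_le_one_div_of_le (by positivity) (by linarith)
          linarith))
        ⟨0, measure_ne_top ν _⟩
      rwa [hinter] at this
    refine ge_of_tendsto' htend fun n => ?_
    have hlt : sInf SA < a + 1 / (n + 1 : ℝ) := by
      have : (0 : ℝ) < 1 / (n + 1 : ℝ) := by positivity
      rw [← hadef]; linarith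
    obtain ⟨t, htSA, htlt⟩ := (csInf_lt_iff hSAbdd hSAne).mp hlt
    exact htSA.trans (measure_mono (Iic_subset_Iic.mpr htlt.le))
  have haIio : ν (Iio a) ≤ κ' := by
    have hunion : ⋃ n : ℕ, Iic (a - 1 / (n + 1 : ℝ)) = Iio a := by
      ext x
      simp only [mem_iUnion, mem_Iic, mem_Iio]
      constructor
      · rintro ⟨n, hn⟩
        have : (0 : ℝ) < 1 / (n + 1 : ℝ) := by positivity
        linarith
      · intro hx
        obtain ⟨n, hn⟩ := exists_nat_one_div_lt (sub_pos.mpr hx)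
        exact ⟨n, by push_cast at hn ⊢; linarith⟩
    have htend : Tendsto (fun n : ℕ => ν (Iic (a - 1 / (n + 1 : ℝ)))) atTop (𝓝 (ν (Iio a))) := by
      have := tendsto_measure_iUnion_atTop (μ := ν)
        (s := fun n : ℕ => Iic (a - 1 / (n + 1 : ℝ)))
        (fun n m hnm => Iic_subset_Iic.mpr (by
          have hc : (n : ℝ) ≤ m := Nat.cast_le.mpr hnm
          have : 1 / (m + 1 : ℝ) ≤ 1 / (n + 1 : ℝ) :=
            one_div_le_one_div_of_le (by positivity) (by linarith)
          linarith))
      rwa [hunion] at this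
    refine le_of_tendsto' htend fun n => ?_
    have hnot : a - 1 / (n + 1 : ℝ) ∉ SA := by
      refine notMem_of_lt_csInf ?_ hSAbdd
      rw [← hadef]
      have : (0 : ℝ) < 1 / (n + 1 : ℝ) := by positivity
      linarith
    exact le_of_not_ge hnot
  -- left quantile
  set SB : Set ℝ := {t | κ' ≤ ν (Ici t)} with hSBdef
  have hSBne : SB.Nonempty := by
    obtain ⟨t, ht⟩ := ((tendsto_measure_Ici_atBot ν).eventually_const_le
      (by rw [measure_univ]; exact hκ'lt1)).exists
    exact ⟨t, ht⟩
  have hSBbdd : BddAbove SB := by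
    have hempty : ⋂ n : ℕ, Ici ((n : ℝ)) = ∅ := by
      ext x
      simp only [mem_iInter, mem_Ici, mem_empty_iff_false, iff_false, not_forall, not_le]
      obtain ⟨n, hn⟩ := exists_nat_gt x
      exact ⟨n, hn⟩
    have htend : Tendsto (fun n : ℕ => ν (Ici ((n : ℝ)))) atTop (𝓝 0) := by
      have := tendsto_measure_iInter_atTop (μ := ν)
        (fun n : ℕ => measurableSet_Ici.nullMeasurableSet)
        (fun n m hnm => Ici_subset_Ici.mpr (Nat.cast_le.mpr hnm))
        ⟨0, measure_ne_top ν _⟩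
      rwa [hempty, measure_empty] at this
    obtain ⟨n, hn⟩ := (htend.eventually_lt_const (pos_iff_ne_zero.mpr hκ'0)).exists
    refine ⟨(n : ℝ), fun t ht => le_of_not_gt fun hlt => ?_⟩
    exact absurd (ht.trans (measure_mono (Ici_subset_Ici.mpr hlt.le))) (not_le.mpr hn)
  set b : ℝ := sSup SB with hbdef
  have hbIci : κ' ≤ ν (Ici b) := by
    have hinter : ⋂ n : ℕ, Ici (b - 1 / (n + 1 : ℝ)) = Ici b := by
      ext x
      simp only [mem_iInter, mem_Ici]
      constructor
      · intro hx
        by_contra hxb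
        push_neg at hxb
        obtain ⟨n, hn⟩ := exists_nat_one_div_lt (sub_pos.mpr hxb)
        exact absurd (hx n) (by push_cast; linarith)
      · intro hx n
        have : (0 : ℝ) < 1 / (n + 1 : ℝ) := by positivity
        linarith
    have htend : Tendsto (fun n : ℕ => ν (Ici (b - 1 / (n + 1 : ℝ)))) atTop (𝓝 (ν (Ici b))) := by
      have := tendsto_measure_iInter_atTop (μ := ν)
        (s := fun n : ℕ => Ici (b - 1 / (n + 1 : ℝ)))
        (fun n : ℕ => measurableSet_Ici.nullMeasurableSet)
        (fun n m hnm => Ici_subset_Ici.mpr (by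
          have hc : (n : ℝ) ≤ m := Nat.cast_le.mpr hnm
          have : 1 / (m + 1 : ℝ) ≤ 1 / (n + 1 : ℝ) :=
            one_div_le_one_div_of_le (by positivity) (by linarith)
          linarith))
        ⟨0, measure_ne_top ν _⟩
      rwa [hinter] at this
    refine ge_of_tendsto' htend fun n => ?_
    have hlt : b - 1 / (n + 1 : ℝ) < sSup SB := by
      have : (0 : ℝ) < 1 / (n + 1 : ℝ) := by positivity
      rw [← hbdef]; linarith
    obtain ⟨t, htSB, htlt⟩ := exists_lt_of_lt_csSup hSBne hlt
    exact htSB.trans (measure_mono (Ici_subset_Ici.mpr htlt.le))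
  have hbIoi : ν (Ioi b) ≤ κ' := by
    have hunion : ⋃ n : ℕ, Ici (b + 1 / (n + 1 : ℝ)) = Ioi b := by
      ext x
      simp only [mem_iUnion, mem_Ici, mem_Ioi]
      constructor
      · rintro ⟨n, hn⟩
        have : (0 : ℝ) < 1 / (n + 1 : ℝ) := by positivity
        linarith
      · intro hx
        obtain ⟨n, hn⟩ := exists_nat_one_div_lt (sub_pos.mpr hx)
        exact ⟨n, by push_cast at hn ⊢; linarith⟩
    have htend : Tendsto (fun n : ℕ => ν (Ici (b + 1 / (n + 1 : ℝ)))) atTop (𝓝 (ν (Ioi b))) := by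
      have := tendsto_measure_iUnion_atTop (μ := ν)
        (s := fun n : ℕ => Ici (b + 1 / (n + 1 : ℝ)))
        (fun n m hnm => Ici_subset_Ici.mpr (by
          have hc : (n : ℝ) ≤ m := Nat.cast_le.mpr hnm
          have : 1 / (m + 1 : ℝ) ≤ 1 / (n + 1 : ℝ) :=
            one_div_le_one_div_of_le (by positivity) (by linarith)
          linarith))
      rwa [hunion] at this
    refine le_of_tendsto' htend fun n => ?_
    have hnot : b + 1 / (n + 1 : ℝ) ∉ SB := by
      refine notMem_of_csSup_lt ?_ hSBbdd
      rw [← hbdef]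
      have : (0 : ℝ) < 1 / (n + 1 : ℝ) := by positivity
      linarith
    exact le_of_not_ge hnot
  -- main estimate
  have hcond : ν univ - κ ≤ ν (Icc a b) := by
    rw [tsub_le_iff_right]
    calc ν univ ≤ ν (Icc a b ∪ (Iio a ∪ Ioi b)) := by
          refine measure_mono fun x _ => ?_
          rcases lt_or_ge x a with hxa | hxa
          · exact Or.inr (Or.inl hxa)
          rcases le_or_gt x b with hxb | hxb
          · exact Or.inl ⟨hxa, hxb⟩
          · exact Or.inr (Or.inr hxb)
      _ ≤ ν (Icc a b) + (ν (Iio a) + ν (Ioi b)) :=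
          (measure_union_le _ _).trans (by gcongr; exact measure_union_le _ _)
      _ ≤ ν (Icc a b) + κ := by
          refine add_le_add_right (le_trans ?_ h2) _
          rw [two_mul]
          exact add_le_add haIio hbIoi
  have hsetd : ENNReal.ofReal (b - a) ≤ setEDist (Iic a) (Ici b) := by
    refine le_iInf₂ fun x hx => le_iInf₂ fun y hy => ?_
    rw [edist_dist]
    refine ENNReal.ofReal_le_ofReal ?_
    rw [Real.dist_eq]
    simp only [mem_Iic] at hx
    simp only [mem_Ici] at hy
    calc b - a ≤ y - x := by linarith
      _ ≤ |x - y| := by rw [abs_sub_comm]; exact le_abs_self _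
  have hsep : ENNReal.ofReal (b - a) ≤ sepDist ν κ' κ' :=
    hsetd.trans (le_iSup_of_le (Iic a) (le_iSup_of_le (Ici b)
      (le_iSup_of_le measurableSet_Iic (le_iSup_of_le measurableSet_Ici
        (le_iSup_of_le haIic (le_iSup_of_le hbIci le_rfl))))))
  refine le_trans (iInf₂_le_of_le (Icc a b) measurableSet_Icc (iInf_le_of_le hcond le_rfl)) ?_
  rw [show EMetric.diam (Icc a b) = Metric.ediam (Icc a b) from rfl, Real.ediam_Icc]
  exact hsep

lemma obs_le_sep {Z : Type*} [MetricSpace Z] [MeasurableSpace Z] [BorelSpace Z]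
    (μ : Measure Z) [IsProbabilityMeasure μ] {κ κ' : ℝ≥0∞}
    (hκ'0 : κ' ≠ 0) (h2 : 2 * κ' ≤ κ) : obsDiam ℝ μ κ ≤ sepDist μ κ' κ' := by
  refine iSup_le fun f => iSup_le fun hf => ?_
  haveI : IsProbabilityMeasure (Measure.map f μ) :=
    Measure.isProbabilityMeasure_map hf.continuous.measurable.aemeasurable
  exact (partialDiam_le_sepDist_real _ hκ'0 h2).trans (sep_map_le μ hf _ _)

/-- A sequence of mm-spaces is a Lévy family if its observable diameters (viewed in `ℝ`)
tend to zero for every `κ > 0`. -/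
def IsLevyFamily (X : ℕ → Type*) [∀ n, PseudoEMetricSpace (X n)]
    [∀ n, MeasurableSpace (X n)] (μ : ∀ n, Measure (X n)) : Prop :=
  ∀ κ : ℝ≥0∞, 0 < κ → Tendsto (fun n => obsDiam ℝ (μ n) κ) atTop (nhds 0)

theorem stmt_4 (X : ℕ → Type) [∀ n, MetricSpace (X n)] [∀ n, CompleteSpace (X n)]
    [∀ n, TopologicalSpace.SeparableSpace (X n)]
    [∀ n, MeasurableSpace (X n)] [∀ n, BorelSpace (X n)]
    (μ : ∀ n, Measure (X n)) (hprob : ∀ n, IsProbabilityMeasure (μ n)) :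
    IsLevyFamily X μ ↔
      ∀ κ : ℝ≥0∞, 0 < κ → Tendsto (fun n => sepDist (μ n) κ κ) atTop (nhds 0) := by
  constructor
  · intro hLevy κ hκ
    set κ'' : ℝ≥0∞ := min κ 1 / 2 with hκ''def
    have hmin0 : min κ 1 ≠ 0 := (lt_min hκ one_pos).ne'
    have hmintop : min κ 1 ≠ ∞ := ne_top_of_le_ne_top one_ne_top (min_le_right _ _)
    have hκ''0 : 0 < κ'' := ENNReal.div_pos hmin0 (by norm_num)
    have hκ''lt : κ'' < κ :=
      lt_of_lt_of_le (ENNReal.half_lt_self hmin0 hmintop) (min_le_left _ _)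
    refine tendsto_of_tendsto_of_tendsto_of_le_of_le tendsto_const_nhds
      (hLevy κ'' hκ''0) (fun n => zero_le) (fun n => ?_)
    haveI := hprob n
    exact sep_le_obs (μ n) hκ''lt
  · intro hSep κ hκ
    have hhalf0 : (κ / 2) ≠ 0 := (ENNReal.div_pos hκ.ne' (by norm_num)).ne'
    refine tendsto_of_tendsto_of_tendsto_of_le_of_le tendsto_const_nhds
      (hSep (κ / 2) (pos_iff_ne_zero.mpr hhalf0)) (fun n => zero_le) (fun n => ?_)
    haveI := hprob n
    exact obs_le_sep (μ n) hhalf0 ENNReal.mul_div_le
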